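/- arXiv:2512.17084 — 4 statements merged into one kernel-verified Lean document; each statement's English description precedes it below -/
import Mathlib

section
/- Let W, W' : [0,1]² → ℝ be integrable measurable functions and let δ ≥ 0 be such that for all measurable sets S, T ⊆ [0,1] one has |∫_{S×T} (W(u,v) − W'(u,v)) du dv| ≤ δ. Let f ≥ 1 and let X : [0,1] → ℝ^f be measurable with ‖X(u)‖ ≤ M for all u ∈ [0,1]. Then |Φ(W,X) − Φ(W',X)| ≤ 16 f M² δ, where Φ(W,X) := ∫₀¹∫₀¹ W(u,v) ‖X(u) − X(v)‖² du dv. -/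
open MeasureTheory Set

/-- Sign-splitting bound: if all set integrals of `F` over subsets of `[0,1]` are
bounded by `η`, and `0 ≤ h ≤ c` on `S ⊆ [0,1]`, then `|∫_S h F| ≤ c η`. -/
lemma aux_sign_bound_nonneg {F h : ℝ → ℝ} {c η : ℝ} (hc : 0 ≤ c)
    (hFm : Measurable F)
    (hFint : IntegrableOn F (Icc (0:ℝ) 1))
    (hhFint : IntegrableOn (fun x => h x * F x) (Icc (0:ℝ) 1))
    (hη : ∀ S : Set ℝ, MeasurableSet S → S ⊆ Icc (0:ℝ) 1 → |∫ x in S, F x| ≤ η)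
    {S : Set ℝ} (hSm : MeasurableSet S) (hSsub : S ⊆ Icc (0:ℝ) 1)
    (hh0 : ∀ x ∈ S, 0 ≤ h x) (hhc : ∀ x ∈ S, h x ≤ c) :
    |∫ x in S, h x * F x| ≤ c * η := by
  have hPm : MeasurableSet {x : ℝ | 0 ≤ F x} := measurableSet_le measurable_const hFm
  set P := {x : ℝ | 0 ≤ F x} with hP
  have hint : IntegrableOn (fun x => h x * F x) S := hhFint.mono_set hSsub
  have hFS : IntegrableOn F S := hFint.mono_set hSsub
  have hsplit : (∫ x in S ∩ P, h x * F x) + ∫ x in S \ P, h x * F x = ∫ x in S, h x * F x :=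
    integral_inter_add_diff hPm hint
  have hsplitF : (∫ x in S ∩ P, F x) + ∫ x in S \ P, F x = ∫ x in S, F x :=
    integral_inter_add_diff hPm hFS
  -- upper bound
  have h1 : ∫ x in S ∩ P, h x * F x ≤ c * η := by
    calc ∫ x in S ∩ P, h x * F x ≤ ∫ x in S ∩ P, c * F x := by
          apply setIntegral_mono_on (hint.mono_set inter_subset_left)
            ((hFS.mono_set inter_subset_left).const_mul c) (hSm.inter hPm)
          intro x hx
          exact mul_le_mul_of_nonneg_right (hhc x hx.1) hx.2
      _ = c * ∫ x in S ∩ P, F x := integral_const_mul c F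
      _ ≤ c * |∫ x in S ∩ P, F x| := by
          exact mul_le_mul_of_nonneg_left (le_abs_self _) hc
      _ ≤ c * η := by
          refine mul_le_mul_of_nonneg_left ?_ hc
          exact hη _ (hSm.inter hPm) (inter_subset_left.trans hSsub)
  have h2 : ∫ x in S \ P, h x * F x ≤ 0 := by
    apply setIntegral_nonpos (hSm.diff hPm)
    intro x hx
    exact mul_nonpos_of_nonneg_of_nonpos (hh0 x hx.1) (le_of_lt (by simpa [hP] using hx.2))
  -- lower bound
  have h3 : 0 ≤ ∫ x in S ∩ P, h x * F x := by
    apply setIntegral_nonneg (hSm.inter hPm)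
    intro x hx
    exact mul_nonneg (hh0 x hx.1) hx.2
  have h4 : -(c * η) ≤ ∫ x in S \ P, h x * F x := by
    calc -(c * η) ≤ c * ∫ x in S \ P, F x := by
          rw [neg_le, ← mul_neg]
          refine mul_le_mul_of_nonneg_left ?_ hc
          have := hη _ (hSm.diff hPm) (diff_subset.trans hSsub)
          rw [abs_le] at this
          linarith [this.1]
      _ = ∫ x in S \ P, c * F x := (integral_const_mul c F).symm
      _ ≤ ∫ x in S \ P, h x * F x := by
          apply setIntegral_mono_on ((hFS.mono_set diff_subset).const_mul c)
            (hint.mono_set diff_subset) (hSm.diff hPm)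
          intro x hx
          have hFx : F x ≤ 0 := le_of_lt (by simpa [hP] using hx.2)
          nlinarith [hhc x hx.1, hh0 x hx.1]
  rw [abs_le]
  constructor <;> linarith

/-- If `|h| ≤ c` on `[0,1]` and all set integrals of `F` are bounded by `η`,
then `|∫_{[0,1]} h F| ≤ 2 c η`. -/
lemma aux_sign_bound {F h : ℝ → ℝ} {c η : ℝ} (hc : 0 ≤ c)
    (hFm : Measurable F) (hhm : Measurable h)
    (hFint : IntegrableOn F (Icc (0:ℝ) 1))
    (hhFint : IntegrableOn (fun x => h x * F x) (Icc (0:ℝ) 1))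
    (hη : ∀ S : Set ℝ, MeasurableSet S → S ⊆ Icc (0:ℝ) 1 → |∫ x in S, F x| ≤ η)
    (hh : ∀ x ∈ Icc (0:ℝ) 1, |h x| ≤ c) :
    |∫ x in Icc (0:ℝ) 1, h x * F x| ≤ 2 * c * η := by
  have hQm : MeasurableSet {x : ℝ | 0 ≤ h x} := measurableSet_le measurable_const hhm
  set Q := {x : ℝ | 0 ≤ h x} with hQ
  have hIm : MeasurableSet (Icc (0:ℝ) 1) := measurableSet_Icc
  have hsplit : (∫ x in Icc (0:ℝ) 1 ∩ Q, h x * F x) + ∫ x in Icc (0:ℝ) 1 \ Q, h x * F x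
      = ∫ x in Icc (0:ℝ) 1, h x * F x := integral_inter_add_diff hQm hhFint
  have b1 : |∫ x in Icc (0:ℝ) 1 ∩ Q, h x * F x| ≤ c * η := by
    apply aux_sign_bound_nonneg hc hFm hFint hhFint hη (hIm.inter hQm) inter_subset_left
    · intro x hx; exact hx.2
    · intro x hx
      have h0 : (0:ℝ) ≤ h x := hx.2
      have := hh x hx.1
      rw [abs_of_nonneg h0] at this; exact this
  have b2 : |∫ x in Icc (0:ℝ) 1 \ Q, h x * F x| ≤ c * η := by
    have : ∫ x in Icc (0:ℝ) 1 \ Q, h x * F x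
        = -∫ x in Icc (0:ℝ) 1 \ Q, (-h x) * F x := by
      rw [← integral_neg]; congr 1; ext x; ring
    rw [this, abs_neg]
    apply aux_sign_bound_nonneg hc hFm hFint ?_ hη (hIm.diff hQm) diff_subset
    · intro x hx
      have : h x < 0 := by simpa [hQ] using hx.2
      linarith
    · intro x hx
      have := hh x hx.1
      have hneg : h x < 0 := by simpa [hQ] using hx.2
      rw [abs_of_neg hneg] at this; linarith
    · have : (fun x => (-h x) * F x) = fun x => (-1 : ℝ) * (h x * F x) := by ext x; ring
      rw [this]; exact hhFint.const_mul _
  calc |∫ x in Icc (0:ℝ) 1, h x * F x|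
      ≤ |∫ x in Icc (0:ℝ) 1 ∩ Q, h x * F x| + |∫ x in Icc (0:ℝ) 1 \ Q, h x * F x| := by
        rw [← hsplit]; exact abs_add_le _ _
    _ ≤ 2 * c * η := by linarith

/-- The workhorse: a cut-norm bound on `D` implies a bound on bilinear test integrals. -/
lemma aux_bilin_cut_bound (D : ℝ → ℝ → ℝ) {δ : ℝ}
    (hDm : Measurable fun p : ℝ × ℝ => D p.1 p.2)
    (hDint : Integrable (fun p : ℝ × ℝ => D p.1 p.2)
      ((volume.restrict (Icc (0:ℝ) 1)).prod (volume.restrict (Icc (0:ℝ) 1))))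
    (hcut : ∀ S T : Set ℝ, MeasurableSet S → MeasurableSet T →
      S ⊆ Icc (0:ℝ) 1 → T ⊆ Icc (0:ℝ) 1 → |∫ u in S, ∫ v in T, D u v| ≤ δ)
    {φ ψ : ℝ → ℝ} {c d : ℝ} (hc : 0 ≤ c) (hd : 0 ≤ d)
    (hφm : Measurable φ) (hψm : Measurable ψ)
    (hφ : ∀ u ∈ Icc (0:ℝ) 1, |φ u| ≤ c) (hψ : ∀ u ∈ Icc (0:ℝ) 1, |ψ u| ≤ d) :
    |∫ u in Icc (0:ℝ) 1, ∫ v in Icc (0:ℝ) 1, D u v * (φ u * ψ v)| ≤ 4 * (c * d) * δ := by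
  have hIm : MeasurableSet (Icc (0:ℝ) 1) := measurableSet_Icc
  have hδ0 : 0 ≤ δ := by
    have := hcut ∅ ∅ MeasurableSet.empty MeasurableSet.empty (empty_subset _) (empty_subset _)
    simpa using this
  have hDrint : ∀ S T : Set ℝ, S ⊆ Icc (0:ℝ) 1 → T ⊆ Icc (0:ℝ) 1 →
      Integrable (fun p : ℝ × ℝ => D p.1 p.2)
        ((volume.restrict S).prod (volume.restrict T)) := by
    intro S T hS hT
    exact hDint.mono_measure
      (by rw [Measure.prod_restrict, Measure.prod_restrict]
          exact Measure.restrict_mono (prod_mono hS hT) le_rfl)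
  -- integrability of (u,v) ↦ ψ v * D u v on products of restricted measures
  have hDψm : Measurable fun p : ℝ × ℝ => ψ p.2 * D p.1 p.2 :=
    (hψm.comp measurable_snd).mul hDm
  have hDψint : ∀ S : Set ℝ, MeasurableSet S → S ⊆ Icc (0:ℝ) 1 →
      Integrable (fun p : ℝ × ℝ => ψ p.2 * D p.1 p.2)
        ((volume.restrict S).prod (volume.restrict (Icc (0:ℝ) 1))) := by
    intro S hSm hSsub
    refine Integrable.bdd_mul (c := d) (hDrint S _ hSsub (subset_refl _))
      (hψm.comp measurable_snd).aestronglyMeasurable ?_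
    rw [Measure.prod_restrict]
    refine ae_restrict_of_forall_mem (hSm.prod hIm) ?_
    intro p hp
    simpa using hψ p.2 hp.2
  -- the inner function G
  set G : ℝ → ℝ := fun u => ∫ v in Icc (0:ℝ) 1, ψ v * D u v with hG
  have hGm : Measurable G := by
    have : StronglyMeasurable fun p : ℝ × ℝ => ψ p.2 * D p.1 p.2 := hDψm.stronglyMeasurable
    exact (this.integral_prod_right').measurable
  have hGint : IntegrableOn G (Icc (0:ℝ) 1) :=
    (hDψint _ hIm (subset_refl _)).integral_prod_left
  -- Step 1: ∀ S ⊆ I, |∫_S G| ≤ 2 d δ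
  have hstep1 : ∀ S : Set ℝ, MeasurableSet S → S ⊆ Icc (0:ℝ) 1 →
      |∫ u in S, G u| ≤ 2 * d * δ := by
    intro S hSm hSsub
    set FS : ℝ → ℝ := fun v => ∫ u in S, D u v with hFS
    have hswap : ∫ u in S, G u = ∫ v in Icc (0:ℝ) 1, ψ v * FS v := by
      rw [hG, integral_integral_swap (hDψint S hSm hSsub)]
      congr 1
      ext v
      rw [hFS]
      simp only
      rw [integral_const_mul]
    rw [hswap]
    have hFSm : Measurable FS := by
      have : StronglyMeasurable fun p : ℝ × ℝ => D p.1 p.2 := hDm.stronglyMeasurable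
      exact (this.integral_prod_left').measurable
    have hFSint : IntegrableOn FS (Icc (0:ℝ) 1) :=
      (hDrint S _ hSsub (subset_refl _)).integral_prod_right
    have hψFSint : IntegrableOn (fun v => ψ v * FS v) (Icc (0:ℝ) 1) := by
      refine Integrable.bdd_mul (c := d) hFSint hψm.aestronglyMeasurable ?_
      refine ae_restrict_of_forall_mem hIm ?_
      intro v hv; simpa using hψ v hv
    refine aux_sign_bound hd hFSm hψm hFSint hψFSint ?_ hψ
    intro T hTm hTsub
    have : ∫ v in T, FS v = ∫ u in S, ∫ v in T, D u v := by
      rw [hFS]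
      exact (integral_integral_swap (hDrint S T hSsub hTsub)).symm
    rw [this]
    exact hcut S T hSm hTm hSsub hTsub
  -- Step 2: pull φ out and conclude
  have hmain : ∫ u in Icc (0:ℝ) 1, ∫ v in Icc (0:ℝ) 1, D u v * (φ u * ψ v)
      = ∫ u in Icc (0:ℝ) 1, φ u * G u := by
    congr 1
    ext u
    rw [hG]
    simp only
    rw [← integral_const_mul]
    congr 1; ext v; ring
  rw [hmain]
  have hφGint : IntegrableOn (fun u => φ u * G u) (Icc (0:ℝ) 1) := by
    refine Integrable.bdd_mul (c := c) hGint hφm.aestronglyMeasurable ?_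
    refine ae_restrict_of_forall_mem hIm ?_
    intro u hu; simpa using hφ u hu
  have := aux_sign_bound hc hGm hφm hGint hφGint hstep1 hφ
  calc |∫ u in Icc (0:ℝ) 1, φ u * G u| ≤ 2 * c * (2 * d * δ) := this
    _ = 4 * (c * d) * δ := by ring

/-- The graphon Dirichlet-energy functional
`Φ(W,X) = ∫₀¹∫₀¹ W(u,v) ‖X(u) − X(v)‖² du dv`. -/
noncomputable def graphonEnergy (f : ℕ) (W : ℝ → ℝ → ℝ)
    (X : ℝ → EuclideanSpace ℝ (Fin f)) : ℝ :=
  ∫ u in Set.Icc (0:ℝ) 1, ∫ v in Set.Icc (0:ℝ) 1, W u v * ‖X u - X v‖ ^ 2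

/-- Lipschitz continuity of the Dirichlet-energy graphon functional in the kernel
argument with respect to the cut norm: if `‖W − W'‖_□ ≤ δ` and `‖X(u)‖ ≤ M`, then
`|Φ(W,X) − Φ(W',X)| ≤ 16 f M² δ`. -/
theorem graphonEnergy_kernel_cut_lipschitz
    (f : ℕ) (hf : 1 ≤ f) (W W' : ℝ → ℝ → ℝ) (δ M : ℝ) (hδ : 0 ≤ δ)
    (hWmeas : Measurable fun p : ℝ × ℝ => W p.1 p.2)
    (hW'meas : Measurable fun p : ℝ × ℝ => W' p.1 p.2)
    (hWint : Integrable (fun p : ℝ × ℝ => W p.1 p.2)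
      (volume.restrict (Set.Icc (0:ℝ) 1 ×ˢ Set.Icc (0:ℝ) 1)))
    (hW'int : Integrable (fun p : ℝ × ℝ => W' p.1 p.2)
      (volume.restrict (Set.Icc (0:ℝ) 1 ×ˢ Set.Icc (0:ℝ) 1)))
    (hcut : ∀ S T : Set ℝ, MeasurableSet S → MeasurableSet T →
      S ⊆ Set.Icc (0:ℝ) 1 → T ⊆ Set.Icc (0:ℝ) 1 →
      |∫ u in S, ∫ v in T, (W u v - W' u v)| ≤ δ)
    (X : ℝ → EuclideanSpace ℝ (Fin f)) (hXmeas : Measurable X)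
    (hXbd : ∀ u ∈ Set.Icc (0:ℝ) 1, ‖X u‖ ≤ M) :
    |graphonEnergy f W X - graphonEnergy f W' X| ≤ 16 * f * M ^ 2 * δ := by
  have hIm : MeasurableSet (Icc (0:ℝ) 1) := measurableSet_Icc
  set ν : Measure (ℝ × ℝ) :=
    (volume.restrict (Icc (0:ℝ) 1)).prod (volume.restrict (Icc (0:ℝ) 1)) with hν
  have hνres : ν = volume.restrict (Icc (0:ℝ) 1 ×ˢ Icc (0:ℝ) 1) := by
    rw [hν, Measure.prod_restrict, ← Measure.volume_eq_prod]
  have hM0 : 0 ≤ M := le_trans (norm_nonneg _) (hXbd 0 ⟨le_refl 0, zero_le_one⟩)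
  set D : ℝ → ℝ → ℝ := fun u v => W u v - W' u v with hD
  have hDm : Measurable fun p : ℝ × ℝ => D p.1 p.2 := hWmeas.sub hW'meas
  have hDint : Integrable (fun p : ℝ × ℝ => D p.1 p.2) ν := by
    rw [hνres]; exact hWint.sub hW'int
  -- coordinates
  set x : Fin f → ℝ → ℝ := fun i u => X u i with hx
  have hxm : ∀ i, Measurable (x i) := fun i =>
    (EuclideanSpace.proj i).continuous.measurable.comp hXmeas
  have hxbd : ∀ i, ∀ u ∈ Icc (0:ℝ) 1, |x i u| ≤ M := by
    intro i u hu
    refine le_trans ?_ (hXbd u hu)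
    have := EuclideanSpace.norm_eq (X u)
    rw [this, hx]
    have h1 : |X u i| = Real.sqrt (|X u i|^2) := by rw [Real.sqrt_sq_eq_abs]; simp
    rw [h1]
    apply Real.sqrt_le_sqrt
    exact Finset.single_le_sum (f := fun j => |X u j|^2) (fun j _ => by positivity)
      (Finset.mem_univ i)
  -- generic integrability of an integrable kernel times a bounded measurable function
  have hbddint : ∀ (K : ℝ × ℝ → ℝ), Integrable K ν → ∀ (h : ℝ × ℝ → ℝ) (C : ℝ), Measurable h →
      (∀ p ∈ Icc (0:ℝ) 1 ×ˢ Icc (0:ℝ) 1, |h p| ≤ C) →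
      Integrable (fun p : ℝ × ℝ => K p * h p) ν := by
    intro K hK h C hm hbd
    have hae : ∀ᵐ p ∂ν, ‖h p‖ ≤ C := by
      rw [hνres]
      refine ae_restrict_of_forall_mem (hIm.prod hIm) ?_
      intro p hp; simpa using hbd p hp
    have := Integrable.bdd_mul (c := C) hK hm.aestronglyMeasurable hae
    exact this.congr (ae_of_all _ fun p => mul_comm _ _)
  -- the key bound for separated test functions
  have key : ∀ (φ ψ : ℝ → ℝ) (c d : ℝ), 0 ≤ c → 0 ≤ d → Measurable φ → Measurable ψ →
      (∀ p ∈ Icc (0:ℝ) 1, |φ p| ≤ c) → (∀ p ∈ Icc (0:ℝ) 1, |ψ p| ≤ d) →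
      |∫ p, D p.1 p.2 * (φ p.1 * ψ p.2) ∂ν| ≤ 4 * (c * d) * δ := by
    intro φ ψ c d hc hd hφm hψm hφ hψ
    have hint : Integrable (fun p : ℝ × ℝ => D p.1 p.2 * (φ p.1 * ψ p.2)) ν := by
      refine hbddint _ hDint _ (c * d)
        ((hφm.comp measurable_fst).mul (hψm.comp measurable_snd)) ?_
      intro p hp
      rw [abs_mul]
      exact mul_le_mul (hφ p.1 hp.1) (hψ p.2 hp.2) (abs_nonneg _) hc
    have hint' : Integrable (Function.uncurry fun u v => D u v * (φ u * ψ v))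
        ((volume.restrict (Icc (0:ℝ) 1)).prod (volume.restrict (Icc (0:ℝ) 1))) := hint
    have heq : (∫ p, D p.1 p.2 * (φ p.1 * ψ p.2) ∂ν)
        = ∫ u in Icc (0:ℝ) 1, ∫ v in Icc (0:ℝ) 1, D u v * (φ u * ψ v) :=
      (integral_integral (f := fun u v => D u v * (φ u * ψ v)) hint').symm
    rw [heq]
    exact aux_bilin_cut_bound D hDm (hν ▸ hDint) hcut hc hd hφm hψm hφ hψ
  -- the squared-distance integrand and its bound
  set g : ℝ × ℝ → ℝ := fun p => ‖X p.1 - X p.2‖ ^ 2 with hg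
  have hgm : Measurable g :=
    (((hXmeas.comp measurable_fst).sub (hXmeas.comp measurable_snd)).norm).pow_const 2
  have hgbd : ∀ p ∈ Icc (0:ℝ) 1 ×ˢ Icc (0:ℝ) 1, |g p| ≤ 4 * M ^ 2 := by
    intro p hp
    have h1 : ‖X p.1 - X p.2‖ ≤ 2 * M := by
      calc ‖X p.1 - X p.2‖ ≤ ‖X p.1‖ + ‖X p.2‖ := norm_sub_le _ _
        _ ≤ 2 * M := by linarith [hXbd p.1 hp.1, hXbd p.2 hp.2]
    have h2 : g p = ‖X p.1 - X p.2‖ ^ 2 := rfl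
    rw [h2, abs_of_nonneg (by positivity)]
    nlinarith [norm_nonneg (X p.1 - X p.2)]
  -- write the energies as product integrals
  have hWg : Integrable (fun p : ℝ × ℝ => W p.1 p.2 * g p) ν :=
    hbddint _ (hνres ▸ hWint) _ _ hgm hgbd
  have hW'g : Integrable (fun p : ℝ × ℝ => W' p.1 p.2 * g p) ν :=
    hbddint _ (hνres ▸ hW'int) _ _ hgm hgbd
  have hEW : graphonEnergy f W X = ∫ p, W p.1 p.2 * g p ∂ν := by
    have h1 : Integrable (Function.uncurry fun u v => W u v * ‖X u - X v‖ ^ 2)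
        ((volume.restrict (Icc (0:ℝ) 1)).prod (volume.restrict (Icc (0:ℝ) 1))) := hWg
    exact integral_integral (f := fun u v => W u v * ‖X u - X v‖ ^ 2) h1
  have hEW' : graphonEnergy f W' X = ∫ p, W' p.1 p.2 * g p ∂ν := by
    have h1 : Integrable (Function.uncurry fun u v => W' u v * ‖X u - X v‖ ^ 2)
        ((volume.restrict (Icc (0:ℝ) 1)).prod (volume.restrict (Icc (0:ℝ) 1))) := hW'g
    exact integral_integral (f := fun u v => W' u v * ‖X u - X v‖ ^ 2) h1
  have hdiff : graphonEnergy f W X - graphonEnergy f W' X = ∫ p, D p.1 p.2 * g p ∂ν := by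
    rw [hEW, hEW', ← integral_sub hWg hW'g]
    congr 1
    ext p
    rw [hD]; ring
  -- pointwise decomposition
  have hpt : ∀ p : ℝ × ℝ, D p.1 p.2 * g p
      = D p.1 p.2 * ((fun u => ‖X u‖ ^ 2) p.1 * (fun _ => (1:ℝ)) p.2)
      + D p.1 p.2 * ((fun _ => (1:ℝ)) p.1 * (fun v => ‖X v‖ ^ 2) p.2)
      - ∑ i, 2 * (D p.1 p.2 * (x i p.1 * x i p.2)) := by
    intro p
    have hinner : (inner ℝ (X p.1) (X p.2) : ℝ) = ∑ i, x i p.1 * x i p.2 := by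
      simp [PiLp.inner_apply, RCLike.inner_apply, conj_trivial, hx]
      exact Finset.sum_congr rfl (fun i _ => mul_comm _ _)
    have hns : g p = ‖X p.1‖ ^ 2 - 2 * (inner ℝ (X p.1) (X p.2) : ℝ) + ‖X p.2‖ ^ 2 := by
      rw [hg]; exact norm_sub_sq_real (X p.1) (X p.2)
    rw [hns, hinner]
    simp only
    have hsum : ∑ i, 2 * (D p.1 p.2 * (x i p.1 * x i p.2))
        = D p.1 p.2 * (2 * ∑ i, x i p.1 * x i p.2) := by
      rw [Finset.mul_sum, Finset.mul_sum]
      congr 1; ext i; ring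
    rw [hsum]; ring
  -- integrability of each piece
  have hA : Integrable
      (fun p : ℝ × ℝ => D p.1 p.2 * ((fun u => ‖X u‖ ^ 2) p.1 * (fun _ => (1:ℝ)) p.2)) ν := by
    refine hbddint _ hDint _ (M ^ 2)
      ((((hXmeas.norm).pow_const 2).comp measurable_fst).mul measurable_const) ?_
    intro p hp
    have := hXbd p.1 hp.1
    simp only [mul_one]
    rw [abs_of_nonneg (by positivity)]
    nlinarith [norm_nonneg (X p.1)]
  have hB : Integrable
      (fun p : ℝ × ℝ => D p.1 p.2 * ((fun _ => (1:ℝ)) p.1 * (fun v => ‖X v‖ ^ 2) p.2)) ν := by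
    refine hbddint _ hDint _ (M ^ 2)
      ((measurable_const.mul (((hXmeas.norm).pow_const 2).comp measurable_snd))) ?_
    intro p hp
    have := hXbd p.2 hp.2
    simp only [one_mul]
    rw [abs_of_nonneg (by positivity)]
    nlinarith [norm_nonneg (X p.2)]
  have hT : ∀ i : Fin f, Integrable (fun p : ℝ × ℝ => D p.1 p.2 * (x i p.1 * x i p.2)) ν := by
    intro i
    refine hbddint _ hDint _ (M * M)
      (((hxm i).comp measurable_fst).mul ((hxm i).comp measurable_snd)) ?_
    intro p hp
    rw [abs_mul]
    exact mul_le_mul (hxbd i p.1 hp.1) (hxbd i p.2 hp.2) (abs_nonneg _) hM0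
  have hT2 : ∀ i : Fin f,
      Integrable (fun p : ℝ × ℝ => 2 * (D p.1 p.2 * (x i p.1 * x i p.2))) ν :=
    fun i => (hT i).const_mul 2
  -- split the integral
  have hsplit : ∫ p, D p.1 p.2 * g p ∂ν
      = (∫ p, D p.1 p.2 * ((fun u => ‖X u‖ ^ 2) p.1 * (fun _ => (1:ℝ)) p.2) ∂ν)
      + (∫ p, D p.1 p.2 * ((fun _ => (1:ℝ)) p.1 * (fun v => ‖X v‖ ^ 2) p.2) ∂ν)
      - ∑ i, ∫ p, 2 * (D p.1 p.2 * (x i p.1 * x i p.2)) ∂ν := by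
    have heq : (fun p : ℝ × ℝ => D p.1 p.2 * g p)
        = fun p => (D p.1 p.2 * ((fun u => ‖X u‖ ^ 2) p.1 * (fun _ => (1:ℝ)) p.2)
          + D p.1 p.2 * ((fun _ => (1:ℝ)) p.1 * (fun v => ‖X v‖ ^ 2) p.2))
          - ∑ i, 2 * (D p.1 p.2 * (x i p.1 * x i p.2)) := by
      funext p
      linarith [hpt p]
    have e2 : ∫ p, (D p.1 p.2 * ((fun u => ‖X u‖ ^ 2) p.1 * (fun _ => (1:ℝ)) p.2)
          + D p.1 p.2 * ((fun _ => (1:ℝ)) p.1 * (fun v => ‖X v‖ ^ 2) p.2))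
          - ∑ i, 2 * (D p.1 p.2 * (x i p.1 * x i p.2)) ∂ν
        = (∫ p, D p.1 p.2 * ((fun u => ‖X u‖ ^ 2) p.1 * (fun _ => (1:ℝ)) p.2)
          + D p.1 p.2 * ((fun _ => (1:ℝ)) p.1 * (fun v => ‖X v‖ ^ 2) p.2) ∂ν)
          - ∫ p, ∑ i, 2 * (D p.1 p.2 * (x i p.1 * x i p.2)) ∂ν :=
      integral_sub (hA.add hB) (integrable_finset_sum _ fun i _ => hT2 i)
    have e3 : ∫ p, D p.1 p.2 * ((fun u => ‖X u‖ ^ 2) p.1 * (fun _ => (1:ℝ)) p.2)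
          + D p.1 p.2 * ((fun _ => (1:ℝ)) p.1 * (fun v => ‖X v‖ ^ 2) p.2) ∂ν
        = (∫ p, D p.1 p.2 * ((fun u => ‖X u‖ ^ 2) p.1 * (fun _ => (1:ℝ)) p.2) ∂ν)
          + ∫ p, D p.1 p.2 * ((fun _ => (1:ℝ)) p.1 * (fun v => ‖X v‖ ^ 2) p.2) ∂ν :=
      integral_add hA hB
    have e4 : ∫ p, ∑ i, 2 * (D p.1 p.2 * (x i p.1 * x i p.2)) ∂ν
        = ∑ i, ∫ p, 2 * (D p.1 p.2 * (x i p.1 * x i p.2)) ∂ν :=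
      integral_finset_sum _ fun i _ => hT2 i
    rw [heq, e2, e3, e4]
  -- the three bounds
  have bA : |∫ p, D p.1 p.2 * ((fun u => ‖X u‖ ^ 2) p.1 * (fun _ => (1:ℝ)) p.2) ∂ν|
      ≤ 4 * (M ^ 2 * 1) * δ := by
    refine key _ _ _ _ (by positivity) zero_le_one ((hXmeas.norm).pow_const 2)
      measurable_const ?_ ?_
    · intro u hu
      have := hXbd u hu
      rw [abs_of_nonneg (by positivity)]
      nlinarith [norm_nonneg (X u)]
    · intro u _; simp
  have bB : |∫ p, D p.1 p.2 * ((fun _ => (1:ℝ)) p.1 * (fun v => ‖X v‖ ^ 2) p.2) ∂ν|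
      ≤ 4 * (1 * M ^ 2) * δ := by
    refine key _ _ _ _ zero_le_one (by positivity) measurable_const
      ((hXmeas.norm).pow_const 2) ?_ ?_
    · intro u _; simp
    · intro u hu
      have := hXbd u hu
      rw [abs_of_nonneg (by positivity)]
      nlinarith [norm_nonneg (X u)]
  have bT : ∀ i : Fin f, |∫ p, D p.1 p.2 * (x i p.1 * x i p.2) ∂ν| ≤ 4 * (M * M) * δ :=
    fun i => key _ _ _ _ hM0 hM0 (hxm i) (hxm i) (hxbd i) (hxbd i)
  have hsumbd : |∑ i, ∫ p, 2 * (D p.1 p.2 * (x i p.1 * x i p.2)) ∂ν|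
      ≤ (f : ℝ) * (8 * M ^ 2 * δ) := by
    calc |∑ i, ∫ p, 2 * (D p.1 p.2 * (x i p.1 * x i p.2)) ∂ν|
        ≤ ∑ i, |∫ p, 2 * (D p.1 p.2 * (x i p.1 * x i p.2)) ∂ν| :=
          Finset.abs_sum_le_sum_abs _ _
      _ ≤ ∑ _i : Fin f, 8 * M ^ 2 * δ := by
          refine Finset.sum_le_sum fun i _ => ?_
          rw [integral_const_mul, abs_mul, abs_of_nonneg (by norm_num : (0:ℝ) ≤ 2)]
          have := bT i
          nlinarith
      _ = (f : ℝ) * (8 * M ^ 2 * δ) := by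
          rw [Finset.sum_const, Finset.card_univ, Fintype.card_fin, nsmul_eq_mul]
  -- conclusion
  rw [hdiff, hsplit]
  have hfR : (1 : ℝ) ≤ (f : ℝ) := by exact_mod_cast hf
  have hM2δ : 0 ≤ M ^ 2 * δ := by positivity
  calc |(∫ p, D p.1 p.2 * ((fun u => ‖X u‖ ^ 2) p.1 * (fun _ => (1:ℝ)) p.2) ∂ν)
      + (∫ p, D p.1 p.2 * ((fun _ => (1:ℝ)) p.1 * (fun v => ‖X v‖ ^ 2) p.2) ∂ν)
      - ∑ i, ∫ p, 2 * (D p.1 p.2 * (x i p.1 * x i p.2)) ∂ν|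
      ≤ |∫ p, D p.1 p.2 * ((fun u => ‖X u‖ ^ 2) p.1 * (fun _ => (1:ℝ)) p.2) ∂ν|
      + |∫ p, D p.1 p.2 * ((fun _ => (1:ℝ)) p.1 * (fun v => ‖X v‖ ^ 2) p.2) ∂ν|
      + |∑ i, ∫ p, 2 * (D p.1 p.2 * (x i p.1 * x i p.2)) ∂ν| := by
        rw [sub_eq_add_neg]
        refine (abs_add_le _ _).trans ?_
        rw [abs_neg]
        exact add_le_add_left (abs_add_le _ _) _
    _ ≤ 4 * (M ^ 2 * 1) * δ + 4 * (1 * M ^ 2) * δ + (f : ℝ) * (8 * M ^ 2 * δ) :=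
        add_le_add (add_le_add bA bB) hsumbd
    _ ≤ 16 * f * M ^ 2 * δ := by
        nlinarith [mul_nonneg (sub_nonneg.mpr hfR) hM2δ]
end

section
/- Let W : [0,1]² → ℝ be measurable with |W(u,v)| ≤ C for all u, v, and let X, X' : [0,1] → ℝ^f be measurable with ‖X(u)‖ ≤ M and ‖X'(u)‖ ≤ M for all u ∈ [0,1]. Then |Φ(W,X) − Φ(W,X')| ≤ 8 C M ‖X − X'‖_{L²([0,1])}, where Φ(W,X) := ∫₀¹∫₀¹ W(u,v) ‖X(u) − X(v)‖² du dv and ‖X − X'‖_{L²([0,1])} := (∫₀¹ ‖X(u) − X'(u)‖² du)^{1/2}. -/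
open MeasureTheory

/-- Lipschitz continuity of the Dirichlet-energy graphon functional in the signal
argument with respect to the L² norm: if `|W| ≤ C`, `‖X‖ ≤ M` and `‖X'‖ ≤ M`, then
`|Φ(W,X) − Φ(W,X')| ≤ 8 C M ‖X − X'‖_{L²([0,1])}`. -/
theorem graphonEnergy_signal_L2_lipschitz
    (f : ℕ) (W : ℝ → ℝ → ℝ) (C M : ℝ)
    (hWmeas : Measurable fun p : ℝ × ℝ => W p.1 p.2)
    (hWbd : ∀ u v, |W u v| ≤ C)
    (X X' : ℝ → EuclideanSpace ℝ (Fin f))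
    (hXmeas : Measurable X) (hX'meas : Measurable X')
    (hXbd : ∀ u ∈ Set.Icc (0:ℝ) 1, ‖X u‖ ≤ M)
    (hX'bd : ∀ u ∈ Set.Icc (0:ℝ) 1, ‖X' u‖ ≤ M) :
    |graphonEnergy f W X - graphonEnergy f W X'|
      ≤ 8 * C * M * Real.sqrt (∫ u in Set.Icc (0:ℝ) 1, ‖X u - X' u‖ ^ 2) := by
  set I := Set.Icc (0:ℝ) 1 with hI
  set μ := volume.restrict I with hμdef
  have hprob : IsProbabilityMeasure μ := ⟨by
    simp [hμdef, hI, Real.volume_Icc]⟩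
  have hC : 0 ≤ C := le_trans (abs_nonneg _) (hWbd 0 0)
  have hM : 0 ≤ M := le_trans (norm_nonneg _) (hXbd 0 ⟨le_refl 0, zero_le_one⟩)
  set g : ℝ → ℝ := fun u => ‖X u - X' u‖ with hgdef
  have hgmeas : Measurable g := (hXmeas.sub hX'meas).norm
  have hgnonneg : ∀ u, 0 ≤ g u := fun u => norm_nonneg _
  have hgbd : ∀ᵐ u ∂μ, ‖g u‖ ≤ 2 * M := by
    rw [hμdef, ae_restrict_iff' measurableSet_Icc]
    refine ae_of_all _ fun u hu => ?_
    rw [Real.norm_of_nonneg (hgnonneg u)]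
    calc g u ≤ ‖X u‖ + ‖X' u‖ := norm_sub_le _ _
      _ ≤ 2 * M := by linarith [hXbd u hu, hX'bd u hu]
  have hgint : Integrable g μ :=
    (integrable_const (2*M)).mono' hgmeas.aestronglyMeasurable hgbd
  set F : ℝ → ℝ → ℝ := fun u v => W u v * ‖X u - X v‖ ^ 2 with hFdef
  set F' : ℝ → ℝ → ℝ := fun u v => W u v * ‖X' u - X' v‖ ^ 2 with hF'def
  have hFm : ∀ (Y : ℝ → EuclideanSpace ℝ (Fin f)), Measurable Y →
      Measurable (fun p : ℝ × ℝ => W p.1 p.2 * ‖Y p.1 - Y p.2‖ ^ 2) := by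
    intro Y hY
    exact hWmeas.mul (((hY.comp measurable_fst).sub (hY.comp measurable_snd)).norm.pow_const 2)
  -- inner integrability for every u
  have hFint : ∀ (Y : ℝ → EuclideanSpace ℝ (Fin f)), Measurable Y →
      (∀ u ∈ I, ‖Y u‖ ≤ M) →
      ∀ u, Integrable (fun v => W u v * ‖Y u - Y v‖ ^ 2) μ := by
    intro Y hY hYbd u
    refine (integrable_const (C * (‖Y u‖ + M) ^ 2)).mono'
      ((hFm Y hY).comp (measurable_const.prodMk measurable_id)).aestronglyMeasurable ?_
    rw [hμdef, ae_restrict_iff' measurableSet_Icc]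
    refine ae_of_all _ fun v hv => ?_
    have h1 : ‖Y u - Y v‖ ≤ ‖Y u‖ + M := le_trans (norm_sub_le _ _) (by linarith [hYbd v hv])
    have h2 : 0 ≤ ‖Y u - Y v‖ := norm_nonneg _
    rw [Real.norm_eq_abs, abs_mul, abs_pow, abs_of_nonneg h2]
    have h3 : ‖Y u - Y v‖ ^ 2 ≤ (‖Y u‖ + M) ^ 2 := by nlinarith
    have := hWbd u v
    nlinarith [abs_nonneg (W u v)]
  have hFintX := hFint X hXmeas hXbd
  have hFintX' := hFint X' hX'meas hX'bd
  -- outer integrability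
  have houter : ∀ (Y : ℝ → EuclideanSpace ℝ (Fin f)), Measurable Y →
      (∀ u ∈ I, ‖Y u‖ ≤ M) →
      Integrable (fun u => ∫ v, W u v * ‖Y u - Y v‖ ^ 2 ∂μ) μ := by
    intro Y hY hYbd
    refine (integrable_const (C * (2*M) ^ 2)).mono'
      ((hFm Y hY).stronglyMeasurable.integral_prod_right').aestronglyMeasurable ?_
    rw [hμdef, ae_restrict_iff' measurableSet_Icc]
    refine ae_of_all _ fun u hu => ?_
    have hb : ∀ᵐ v ∂μ, ‖W u v * ‖Y u - Y v‖ ^ 2‖ ≤ C * (2*M) ^ 2 := by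
      rw [hμdef, ae_restrict_iff' measurableSet_Icc]
      refine ae_of_all _ fun v hv => ?_
      have h1 : ‖Y u - Y v‖ ≤ 2*M := le_trans (norm_sub_le _ _)
        (by linarith [hYbd v hv, hYbd u hu])
      have h2 : 0 ≤ ‖Y u - Y v‖ := norm_nonneg _
      rw [Real.norm_eq_abs, abs_mul, abs_pow, abs_of_nonneg h2]
      have h3 : ‖Y u - Y v‖ ^ 2 ≤ (2*M) ^ 2 := by nlinarith
      have := hWbd u v
      nlinarith [abs_nonneg (W u v)]
    calc ‖∫ v, W u v * ‖Y u - Y v‖ ^ 2 ∂μ‖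
        ≤ C * (2*M) ^ 2 * (μ Set.univ).toReal :=
          norm_integral_le_of_norm_le_const hb
      _ = C * (2*M) ^ 2 := by simp
  have houterX := houter X hXmeas hXbd
  have houterX' := houter X' hX'meas hX'bd
  -- step 1: difference as single double integral
  have step1 : graphonEnergy f W X - graphonEnergy f W X'
      = ∫ u, (∫ v, (F u v - F' u v) ∂μ) ∂μ := by
    rw [graphonEnergy, graphonEnergy, ← hI, ← hμdef, ← integral_sub houterX houterX']
    exact integral_congr_ae (ae_of_all _ fun u =>
      (integral_sub (hFintX u) (hFintX' u)).symm)
  set ig := ∫ u, g u ∂μ with higdef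
  have hignn : 0 ≤ ig := integral_nonneg hgnonneg
  -- pointwise key bound
  have key : ∀ u ∈ I, ∀ v ∈ I, |F u v - F' u v| ≤ 4*C*M*(g u + g v) := by
    intro u hu v hv
    set a := X u - X v
    set b := X' u - X' v
    have hab : ‖a - b‖ ≤ g u + g v := by
      have : a - b = (X u - X' u) - (X v - X' v) := sub_sub_sub_comm _ _ _ _
      rw [this]
      exact norm_sub_le _ _
    have h1 : |‖a‖ - ‖b‖| ≤ g u + g v := le_trans (abs_norm_sub_norm_le _ _) hab
    have h2 : ‖a‖ ≤ 2*M := le_trans (norm_sub_le _ _) (by linarith [hXbd u hu, hXbd v hv])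
    have h3 : ‖b‖ ≤ 2*M := le_trans (norm_sub_le _ _) (by linarith [hX'bd u hu, hX'bd v hv])
    have hW := hWbd u v
    have : F u v - F' u v = W u v * ((‖a‖ + ‖b‖) * (‖a‖ - ‖b‖)) := by
      simp only [hFdef, hF'def]; ring
    rw [this, abs_mul, abs_mul]
    have h4 : |‖a‖ + ‖b‖| ≤ 4*M := by
      rw [abs_of_nonneg (by positivity)]; linarith
    calc |W u v| * (|‖a‖ + ‖b‖| * |‖a‖ - ‖b‖|) ≤ C * ((4*M) * (g u + g v)) := by
          apply mul_le_mul hW _ (by positivity) hC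
          exact mul_le_mul h4 h1 (abs_nonneg _) (by positivity)
      _ = 4*C*M*(g u + g v) := by ring
  -- bound the double integral
  have step2 : |∫ u, (∫ v, (F u v - F' u v) ∂μ) ∂μ| ≤ 8*C*M*ig := by
    have hinner : ∀ᵐ u ∂μ, ‖∫ v, (F u v - F' u v) ∂μ‖ ≤ 4*C*M*(g u) + 4*C*M*ig := by
      rw [hμdef, ae_restrict_iff' measurableSet_Icc]
      refine ae_of_all _ fun u hu => ?_
      calc ‖∫ v, (F u v - F' u v) ∂μ‖ ≤ ∫ v, ‖F u v - F' u v‖ ∂μ :=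
            norm_integral_le_integral_norm _
        _ ≤ ∫ v, (4*C*M*(g u) + 4*C*M*(g v)) ∂μ := by
            apply integral_mono_ae ((hFintX u).sub (hFintX' u)).norm
              ((integrable_const _).add (hgint.const_mul _))
            refine (ae_restrict_iff' measurableSet_Icc).2 (ae_of_all _ fun v hv => ?_)
            have hk := key u hu v hv
            have h2 : ‖F u v - F' u v‖ ≤ 4*C*M*(g u) + 4*C*M*(g v) := by
              rw [Real.norm_eq_abs]; linarith
            exact h2
        _ = 4*C*M*(g u) + 4*C*M*ig := by
            rw [integral_add (integrable_const _) (hgint.const_mul _),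
              integral_const, integral_const_mul]
            simp [higdef]
    calc |∫ u, (∫ v, (F u v - F' u v) ∂μ) ∂μ|
        ≤ ∫ u, (4*C*M*(g u) + 4*C*M*ig) ∂μ :=
          norm_integral_le_of_norm_le ((hgint.const_mul _).add (integrable_const _)) hinner
      _ = 8*C*M*ig := by
          rw [integral_add (hgint.const_mul _) (integrable_const _),
            integral_const, integral_const_mul]
          simp [higdef]; ring
  -- Cauchy–Schwarz: ig ≤ sqrt (∫ g²)
  have hg2 : MemLp g 2 μ := MemLp.of_bound hgmeas.aestronglyMeasurable (2*M) hgbd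
  have hvar := ProbabilityTheory.variance_nonneg g μ
  rw [ProbabilityTheory.variance_eq_sub hg2] at hvar
  have hsq : ig ^ 2 ≤ ∫ u, g u ^ 2 ∂μ := by
    have : (∫ u, (g ^ 2) u ∂μ) = ∫ u, g u ^ 2 ∂μ := by simp [Pi.pow_apply]
    rw [this] at hvar
    linarith [hvar]
  have hCS : ig ≤ Real.sqrt (∫ u, g u ^ 2 ∂μ) := by
    rw [← Real.sqrt_sq hignn]
    exact Real.sqrt_le_sqrt hsq
  have hfinal : (∫ u in Set.Icc (0:ℝ) 1, ‖X u - X' u‖ ^ 2) = ∫ u, g u ^ 2 ∂μ := rfl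
  rw [step1, hfinal]
  calc |∫ u, (∫ v, (F u v - F' u v) ∂μ) ∂μ| ≤ 8*C*M*ig := step2
    _ ≤ 8*C*M*Real.sqrt (∫ u, g u ^ 2 ∂μ) := by
        apply mul_le_mul_of_nonneg_left hCS (by positivity)
end

section
/- Let C, M ≥ 0. Let (W_n) be a sequence of measurable kernels [0,1]² → ℝ with |W_n(u,v)| ≤ C for all n, u, v, and let W : [0,1]² → ℝ be measurable with |W(u,v)| ≤ C. Let (X_n) be a sequence of measurable signals [0,1] → ℝ^f with ‖X_n(u)‖ ≤ M for all n, u, and let X : [0,1] → ℝ^f be measurable with ‖X(u)‖ ≤ M. Assume (i) sup over measurable sets S, T ⊆ [0,1] of |∫_{S×T} (W_n − W)| → 0 as n → ∞, and (ii) ∫₀¹ ‖X_n(u) − X(u)‖² du → 0 as n → ∞. Then Φ(W_n, X_n) → Φ(W, X) as n → ∞, where Φ(W,X) := ∫₀¹∫₀¹ W(u,v) ‖X(u) − X(v)‖² du dv. -/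
open MeasureTheory Filter

lemma aux_integrable_bdd {α : Type*} [MeasurableSpace α] {μ : Measure α} [IsFiniteMeasure μ]
    {f : α → ℝ} (hf : AEStronglyMeasurable f μ) {K : ℝ} (h : ∀ x, |f x| ≤ K) :
    Integrable f μ :=
  (integrable_const K).mono' hf (Filter.Eventually.of_forall fun x => by
    simpa [Real.norm_eq_abs] using h x)

lemma aux_layer {c A : ℝ} (h0 : 0 ≤ c) (hA : c ≤ A) :
    (∫ s in Set.Icc (0:ℝ) A, (if s < c then (1:ℝ) else 0)) = c := by
  have hfun : (fun s => if s < c then (1:ℝ) else 0)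
      = Set.indicator (Set.Iio c) (fun _ => (1:ℝ)) := by
    funext s; simp [Set.indicator_apply, Set.mem_Iio]
  rw [hfun, integral_indicator measurableSet_Iio,
    Measure.restrict_restrict measurableSet_Iio]
  have hset : Set.Iio c ∩ Set.Icc (0:ℝ) A = Set.Ico 0 c := by
    ext x
    simp only [Set.mem_inter_iff, Set.mem_Iio, Set.mem_Icc, Set.mem_Ico]
    constructor
    · rintro ⟨h1, h2, _⟩; exact ⟨h2, h1⟩
    · rintro ⟨h1, h2⟩; exact ⟨h2, h1, le_trans h2.le hA⟩
  rw [hset]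
  simp [Real.volume_Ico, ENNReal.toReal_ofReal h0, h0]

lemma aux_finite_restrict {S : Set ℝ} (hS : S ⊆ Set.Icc (0:ℝ) 1) :
    IsFiniteMeasure (volume.restrict S) := by
  constructor
  rw [Measure.restrict_apply_univ]
  exact lt_of_le_of_lt (measure_mono hS) (by simp [Real.volume_Icc])

lemma aux_cut_bilinear_nonneg
    {D : ℝ × ℝ → ℝ} (hD : Measurable D) {K : ℝ} (hDbd : ∀ p, |D p| ≤ K)
    {a b : ℝ → ℝ} (ha : Measurable a) (hb : Measurable b)
    {A B : ℝ} (ha0 : ∀ u, 0 ≤ a u) (haA : ∀ u, a u ≤ A)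
    (hb0 : ∀ u, 0 ≤ b u) (hbB : ∀ u, b u ≤ B)
    {ε : ℝ}
    (hcut : ∀ S T : Set ℝ, MeasurableSet S → MeasurableSet T →
      S ⊆ Set.Icc (0:ℝ) 1 → T ⊆ Set.Icc (0:ℝ) 1 →
      |∫ p, D p ∂((volume.restrict S).prod (volume.restrict T))| ≤ ε) :
    |∫ p, D p * (a p.1 * b p.2)
        ∂((volume.restrict (Set.Icc (0:ℝ) 1)).prod (volume.restrict (Set.Icc (0:ℝ) 1)))|
      ≤ ε * (A * B) := by
  have hA0 : 0 ≤ A := le_trans (ha0 0) (haA 0)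
  have hB0 : 0 ≤ B := le_trans (hb0 0) (hbB 0)
  have hK0 : 0 ≤ K := le_trans (abs_nonneg _) (hDbd (0, 0))
  set μ : Measure ℝ := volume.restrict (Set.Icc (0:ℝ) 1) with hμ
  set π : Measure (ℝ × ℝ) := μ.prod μ with hπ
  set ν : Measure (ℝ × ℝ) :=
    (volume.restrict (Set.Icc (0:ℝ) A)).prod (volume.restrict (Set.Icc (0:ℝ) B)) with hν
  haveI : IsFiniteMeasure (volume.restrict (Set.Icc (0:ℝ) A)) := by
    constructor; rw [Measure.restrict_apply_univ]; simp [Real.volume_Icc]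
  haveI : IsFiniteMeasure (volume.restrict (Set.Icc (0:ℝ) B)) := by
    constructor; rw [Measure.restrict_apply_univ]; simp [Real.volume_Icc]
  haveI : IsFiniteMeasure μ := aux_finite_restrict (le_refl _)
  haveI : IsFiniteMeasure π := by rw [hπ]; infer_instance
  haveI : IsFiniteMeasure ν := by rw [hν]; infer_instance
  -- layer-cake representation of the bilinear weight
  have hlayer : ∀ p : ℝ × ℝ, D p * (a p.1 * b p.2)
      = ∫ q, D p * ((if q.1 < a p.1 then (1:ℝ) else 0)
          * (if q.2 < b p.2 then (1:ℝ) else 0)) ∂ν := by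
    intro p
    rw [MeasureTheory.integral_const_mul, hν,
      integral_prod_mul (f := fun s => if s < a p.1 then (1:ℝ) else 0)
        (g := fun t => if t < b p.2 then (1:ℝ) else 0),
      aux_layer (ha0 p.1) (haA p.1), aux_layer (hb0 p.2) (hbB p.2)]
  -- swap the order of integration
  have hint : Integrable
      (Function.uncurry fun (p : ℝ × ℝ) (q : ℝ × ℝ) =>
        D p * ((if q.1 < a p.1 then (1:ℝ) else 0) * (if q.2 < b p.2 then (1:ℝ) else 0)))
      (π.prod ν) := by
    have hm : Measurable fun x : (ℝ × ℝ) × (ℝ × ℝ) =>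
        D x.1 * ((if x.2.1 < a x.1.1 then (1:ℝ) else 0)
          * (if x.2.2 < b x.1.2 then (1:ℝ) else 0)) := by
      apply Measurable.mul
      · exact hD.comp measurable_fst
      · apply Measurable.mul
        · exact Measurable.ite
            (measurableSet_lt (measurable_fst.comp measurable_snd)
              (ha.comp (measurable_fst.comp measurable_fst)))
            measurable_const measurable_const
        · exact Measurable.ite
            (measurableSet_lt (measurable_snd.comp measurable_snd)
              (hb.comp (measurable_snd.comp measurable_fst)))
            measurable_const measurable_const
    apply aux_integrable_bdd (K := K)
    · exact hm.aestronglyMeasurable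
    · intro x
      show |D x.1 * _| ≤ K
      split_ifs <;> first | simpa using hDbd x.1 | simpa using hK0
  have hswap : ∫ p, D p * (a p.1 * b p.2) ∂π
      = ∫ q, (∫ p, D p * ((if q.1 < a p.1 then (1:ℝ) else 0)
          * (if q.2 < b p.2 then (1:ℝ) else 0)) ∂π) ∂ν := by
    rw [integral_congr_ae (Filter.Eventually.of_forall hlayer)]
    exact integral_integral_swap hint
  -- identify the inner integral with an integral over a rectangle
  have hinner : ∀ q : ℝ × ℝ,
      |∫ p, D p * ((if q.1 < a p.1 then (1:ℝ) else 0)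
          * (if q.2 < b p.2 then (1:ℝ) else 0)) ∂π| ≤ ε := by
    intro q
    have hSm : MeasurableSet {u : ℝ | q.1 < a u} := measurableSet_lt measurable_const ha
    have hTm : MeasurableSet {v : ℝ | q.2 < b v} := measurableSet_lt measurable_const hb
    have h1 : ∀ p : ℝ × ℝ, D p * ((if q.1 < a p.1 then (1:ℝ) else 0)
        * (if q.2 < b p.2 then (1:ℝ) else 0))
        = Set.indicator ({u : ℝ | q.1 < a u} ×ˢ {v : ℝ | q.2 < b v}) D p := by
      intro p
      by_cases h1 : q.1 < a p.1 <;> by_cases h2 : q.2 < b p.2 <;>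
        simp [Set.indicator_apply, Set.mem_prod, h1, h2, Set.mem_setOf_eq]
    rw [integral_congr_ae (Filter.Eventually.of_forall h1),
      integral_indicator (hSm.prod hTm)]
    have hres : π.restrict ({u : ℝ | q.1 < a u} ×ˢ {v : ℝ | q.2 < b v})
        = (volume.restrict ({u : ℝ | q.1 < a u} ∩ Set.Icc (0:ℝ) 1)).prod
          (volume.restrict ({v : ℝ | q.2 < b v} ∩ Set.Icc (0:ℝ) 1)) := by
      rw [hπ, ← Measure.prod_restrict, hμ, Measure.restrict_restrict hSm,
        Measure.restrict_restrict hTm]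
    rw [show (∫ p in ({u : ℝ | q.1 < a u} ×ˢ {v : ℝ | q.2 < b v}), D p ∂π)
        = ∫ p, D p ∂(π.restrict ({u : ℝ | q.1 < a u} ×ˢ {v : ℝ | q.2 < b v})) from rfl,
      hres]
    exact hcut _ _ (hSm.inter measurableSet_Icc) (hTm.inter measurableSet_Icc)
      Set.inter_subset_right Set.inter_subset_right
  have hνuniv : (ν Set.univ).toReal = A * B := by
    rw [hν, ← Set.univ_prod_univ, Measure.prod_prod]
    rw [Measure.restrict_apply_univ, Measure.restrict_apply_univ,
      Real.volume_Icc, Real.volume_Icc, sub_zero, sub_zero, ENNReal.toReal_mul, ENNReal.toReal_ofReal hA0, ENNReal.toReal_ofReal hB0]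
  calc |∫ p, D p * (a p.1 * b p.2) ∂π|
      = ‖∫ q, (∫ p, D p * ((if q.1 < a p.1 then (1:ℝ) else 0)
          * (if q.2 < b p.2 then (1:ℝ) else 0)) ∂π) ∂ν‖ := by
        rw [hswap, Real.norm_eq_abs]
    _ ≤ ε * (ν Set.univ).toReal := by
        apply norm_integral_le_of_norm_le_const
        exact Filter.Eventually.of_forall fun q => by
          simpa [Real.norm_eq_abs] using hinner q
    _ = ε * (A * B) := by rw [hνuniv]

lemma aux_cut_bilinear
    {D : ℝ × ℝ → ℝ} (hD : Measurable D) {K : ℝ} (hDbd : ∀ p, |D p| ≤ K)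
    {a b : ℝ → ℝ} (ha : Measurable a) (hb : Measurable b)
    {A B : ℝ} (haA : ∀ u, |a u| ≤ A) (hbB : ∀ u, |b u| ≤ B)
    {ε : ℝ}
    (hcut : ∀ S T : Set ℝ, MeasurableSet S → MeasurableSet T →
      S ⊆ Set.Icc (0:ℝ) 1 → T ⊆ Set.Icc (0:ℝ) 1 →
      |∫ p, D p ∂((volume.restrict S).prod (volume.restrict T))| ≤ ε) :
    |∫ p, D p * (a p.1 * b p.2)
        ∂((volume.restrict (Set.Icc (0:ℝ) 1)).prod (volume.restrict (Set.Icc (0:ℝ) 1)))|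
      ≤ 4 * (ε * (A * B)) := by
  have hA0 : 0 ≤ A := le_trans (abs_nonneg _) (haA 0)
  have hB0 : 0 ≤ B := le_trans (abs_nonneg _) (hbB 0)
  have hK0 : 0 ≤ K := le_trans (abs_nonneg _) (hDbd (0, 0))
  haveI : IsFiniteMeasure (volume.restrict (Set.Icc (0:ℝ) 1)) := aux_finite_restrict (le_refl _)
  set μ : Measure ℝ := volume.restrict (Set.Icc (0:ℝ) 1) with hμ
  set π : Measure (ℝ × ℝ) := μ.prod μ with hπ
  haveI : IsFiniteMeasure π := by rw [hπ]; infer_instance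
  set ap : ℝ → ℝ := fun u => max (a u) 0 with hap
  set am : ℝ → ℝ := fun u => max (-a u) 0 with ham
  set bp : ℝ → ℝ := fun u => max (b u) 0 with hbp
  set bm : ℝ → ℝ := fun u => max (-b u) 0 with hbm
  have hmax : ∀ x : ℝ, max x 0 - max (-x) 0 = x := fun x => by
    rcases le_total x 0 with h | h
    · rw [max_eq_right h, max_eq_left (by linarith)]; ring
    · rw [max_eq_left h, max_eq_right (by linarith)]; ring
  have hapm : Measurable ap := ha.max measurable_const
  have hamm : Measurable am := ha.neg.max measurable_const
  have hbpm : Measurable bp := hb.max measurable_const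
  have hbmm : Measurable bm := hb.neg.max measurable_const
  have hap0 : ∀ u, 0 ≤ ap u := fun u => le_max_right _ _
  have ham0 : ∀ u, 0 ≤ am u := fun u => le_max_right _ _
  have hbp0 : ∀ u, 0 ≤ bp u := fun u => le_max_right _ _
  have hbm0 : ∀ u, 0 ≤ bm u := fun u => le_max_right _ _
  have hapA : ∀ u, ap u ≤ A := fun u =>
    max_le (le_trans (le_abs_self _) (haA u)) hA0
  have hamA : ∀ u, am u ≤ A := fun u =>
    max_le (le_trans (neg_le_abs _) (haA u)) hA0
  have hbpB : ∀ u, bp u ≤ B := fun u =>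
    max_le (le_trans (le_abs_self _) (hbB u)) hB0
  have hbmB : ∀ u, bm u ≤ B := fun u =>
    max_le (le_trans (neg_le_abs _) (hbB u)) hB0
  have hintterm : ∀ (c d : ℝ → ℝ), Measurable c → Measurable d →
      (∀ u, 0 ≤ c u) → (∀ u, c u ≤ A) → (∀ u, 0 ≤ d u) → (∀ u, d u ≤ B) →
      Integrable (fun p : ℝ × ℝ => D p * (c p.1 * d p.2)) π := by
    intro c d hc hd hc0 hcA hd0 hdB
    apply aux_integrable_bdd (K := K * (A * B))
    · exact ((hD.mul ((hc.comp measurable_fst).mul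
        (hd.comp measurable_snd)))).aestronglyMeasurable
    · intro p
      rw [abs_mul, abs_mul, abs_of_nonneg (hc0 p.1), abs_of_nonneg (hd0 p.2)]
      exact mul_le_mul (hDbd p)
        (mul_le_mul (hcA p.1) (hdB p.2) (hd0 p.2) hA0)
        (mul_nonneg (hc0 p.1) (hd0 p.2))
        hK0
  have i1 := hintterm ap bp hapm hbpm hap0 hapA hbp0 hbpB
  have i2 := hintterm ap bm hapm hbmm hap0 hapA hbm0 hbmB
  have i3 := hintterm am bp hamm hbpm ham0 hamA hbp0 hbpB
  have i4 := hintterm am bm hamm hbmm ham0 hamA hbm0 hbmB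
  have hpt : ∀ p : ℝ × ℝ, D p * (a p.1 * b p.2)
      = (D p * (ap p.1 * bp p.2) - D p * (ap p.1 * bm p.2))
        - (D p * (am p.1 * bp p.2) - D p * (am p.1 * bm p.2)) := by
    intro p
    rw [← hmax (a p.1), ← hmax (b p.2)]
    simp only [hap, ham, hbp, hbm]
    ring
  have e1 := aux_cut_bilinear_nonneg hD hDbd hapm hbpm hap0 hapA hbp0 hbpB hcut
  have e2 := aux_cut_bilinear_nonneg hD hDbd hapm hbmm hap0 hapA hbm0 hbmB hcut
  have e3 := aux_cut_bilinear_nonneg hD hDbd hamm hbpm ham0 hamA hbp0 hbpB hcut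
  have e4 := aux_cut_bilinear_nonneg hD hDbd hamm hbmm ham0 hamA hbm0 hbmB hcut
  have i12 : Integrable (fun p : ℝ × ℝ =>
      D p * (ap p.1 * bp p.2) - D p * (ap p.1 * bm p.2)) π := i1.sub i2
  have i34 : Integrable (fun p : ℝ × ℝ =>
      D p * (am p.1 * bp p.2) - D p * (am p.1 * bm p.2)) π := i3.sub i4
  rw [integral_congr_ae (Filter.Eventually.of_forall hpt),
    integral_sub i12 i34, integral_sub i1 i2, integral_sub i3 i4]
  rcases abs_le.mp e1 with ⟨e1l, e1r⟩
  rcases abs_le.mp e2 with ⟨e2l, e2r⟩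
  rcases abs_le.mp e3 with ⟨e3l, e3r⟩
  rcases abs_le.mp e4 with ⟨e4l, e4r⟩
  rw [abs_le]
  constructor <;> linarith

lemma aux_abs_apply_le_norm {f : ℕ} (x : EuclideanSpace ℝ (Fin f)) (i : Fin f) :
    |x i| ≤ ‖x‖ := by
  rw [EuclideanSpace.norm_eq, ← Real.sqrt_sq_eq_abs]
  apply Real.sqrt_le_sqrt
  have := Finset.single_le_sum (f := fun j => ‖x j‖ ^ 2)
    (fun j _ => sq_nonneg _) (Finset.mem_univ i)
  simpa [Real.norm_eq_abs, sq_abs] using this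

set_option maxHeartbeats 2000000 in
/-- Continuity of the Dirichlet-energy graphon functional under joint
graphon–signal convergence: if the kernels `Wseq n` converge to `W` in cut norm and
the signals `Xseq n` converge to `X` in L², all uniformly bounded, then
`Φ(Wseq n, Xseq n) → Φ(W, X)`. -/
theorem graphonEnergy_continuous_graphon_signal_convergence
    (f : ℕ) (C M : ℝ)
    (Wseq : ℕ → ℝ → ℝ → ℝ) (W : ℝ → ℝ → ℝ)
    (hWseqmeas : ∀ n, Measurable fun p : ℝ × ℝ => Wseq n p.1 p.2)
    (hWmeas : Measurable fun p : ℝ × ℝ => W p.1 p.2)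
    (hWseqbd : ∀ n u v, |Wseq n u v| ≤ C)
    (hWbd : ∀ u v, |W u v| ≤ C)
    (Xseq : ℕ → ℝ → EuclideanSpace ℝ (Fin f)) (X : ℝ → EuclideanSpace ℝ (Fin f))
    (hXseqmeas : ∀ n, Measurable (Xseq n)) (hXmeas : Measurable X)
    (hXseqbd : ∀ n u, ‖Xseq n u‖ ≤ M)
    (hXbd : ∀ u, ‖X u‖ ≤ M)
    (hcut : ∀ ε > (0:ℝ), ∃ N : ℕ, ∀ n ≥ N,
      ∀ S T : Set ℝ, MeasurableSet S → MeasurableSet T →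
        S ⊆ Set.Icc (0:ℝ) 1 → T ⊆ Set.Icc (0:ℝ) 1 →
        |∫ u in S, ∫ v in T, (Wseq n u v - W u v)| ≤ ε)
    (hL2 : Tendsto (fun n => ∫ u in Set.Icc (0:ℝ) 1, ‖Xseq n u - X u‖ ^ 2)
      atTop (nhds 0)) :
    Tendsto (fun n => graphonEnergy f (Wseq n) (Xseq n)) atTop
      (nhds (graphonEnergy f W X)) := by
  classical
  set μ : Measure ℝ := volume.restrict (Set.Icc (0:ℝ) 1) with hμ
  set π : Measure (ℝ × ℝ) := μ.prod μ with hπ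
  haveI : IsFiniteMeasure μ := aux_finite_restrict (le_refl _)
  haveI : IsFiniteMeasure π := by rw [hπ]; infer_instance
  have hμuniv : (μ Set.univ).toReal = 1 := by
    rw [hμ, Measure.restrict_apply_univ, Real.volume_Icc]; norm_num
  have hC0 : 0 ≤ C := le_trans (abs_nonneg _) (hWbd 0 0)
  have hM0 : 0 ≤ M := le_trans (norm_nonneg _) (hXbd 0)
  -- measurability of the squared-distance integrands
  have hgm : ∀ (Y : ℝ → EuclideanSpace ℝ (Fin f)), Measurable Y →
      Measurable fun p : ℝ × ℝ => ‖Y p.1 - Y p.2‖ ^ 2 := fun Y hY =>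
    (((hY.comp measurable_fst).sub (hY.comp measurable_snd)).norm).pow_const 2
  have hgbd : ∀ (Y : ℝ → EuclideanSpace ℝ (Fin f)), (∀ u, ‖Y u‖ ≤ M) →
      ∀ p : ℝ × ℝ, ‖Y p.1 - Y p.2‖ ^ 2 ≤ 4 * M ^ 2 := by
    intro Y hY p
    have h1 : ‖Y p.1 - Y p.2‖ ≤ 2 * M :=
      le_trans (norm_sub_le _ _) (by linarith [hY p.1, hY p.2])
    nlinarith [norm_nonneg (Y p.1 - Y p.2)]
  -- integrability of energy integrands
  have hintW : ∀ (V : ℝ → ℝ → ℝ), (Measurable fun p : ℝ × ℝ => V p.1 p.2) →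
      (∀ u v, |V u v| ≤ C) → ∀ (Y : ℝ → EuclideanSpace ℝ (Fin f)), Measurable Y →
      (∀ u, ‖Y u‖ ≤ M) →
      Integrable (fun p : ℝ × ℝ => V p.1 p.2 * ‖Y p.1 - Y p.2‖ ^ 2) π := by
    intro V hV hVb Y hY hYb
    refine aux_integrable_bdd (K := C * (4 * M ^ 2)) ?_ ?_
    · exact (hV.mul (hgm Y hY)).aestronglyMeasurable
    · intro p
      rw [abs_mul, abs_of_nonneg (sq_nonneg (‖Y p.1 - Y p.2‖))]
      exact mul_le_mul (hVb p.1 p.2) (hgbd Y hYb p) (sq_nonneg _) hC0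
  -- product representation of the energy
  have hrep : ∀ (V : ℝ → ℝ → ℝ) (Y : ℝ → EuclideanSpace ℝ (Fin f)),
      Integrable (fun p : ℝ × ℝ => V p.1 p.2 * ‖Y p.1 - Y p.2‖ ^ 2) π →
      graphonEnergy f V Y = ∫ p, V p.1 p.2 * ‖Y p.1 - Y p.2‖ ^ 2 ∂π := by
    intro V Y hint
    unfold graphonEnergy
    exact (integral_prod _ hint).symm
  -- L¹ convergence of the signals
  have hL1 : Tendsto (fun n => ∫ u, ‖Xseq n u - X u‖ ∂μ) atTop (nhds 0) := by
    rw [Metric.tendsto_atTop]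
    intro δ hδ
    obtain ⟨N, hN⟩ := Metric.tendsto_atTop.mp hL2 (δ ^ 2 / 4) (by positivity)
    refine ⟨N, fun n hn => ?_⟩
    have hd1 : Integrable (fun u => ‖Xseq n u - X u‖) μ := by
      refine aux_integrable_bdd (K := 2 * M) ?_ ?_
      · exact ((hXseqmeas n).sub hXmeas).norm.aestronglyMeasurable
      · intro u
        rw [abs_of_nonneg (norm_nonneg _)]
        exact le_trans (norm_sub_le _ _) (by linarith [hXseqbd n u, hXbd u])
    have hd2 : Integrable (fun u => ‖Xseq n u - X u‖ ^ 2) μ := by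
      refine aux_integrable_bdd (K := 4 * M ^ 2) ?_ ?_
      · exact (((hXseqmeas n).sub hXmeas).norm.pow_const 2).aestronglyMeasurable
      · intro u
        rw [abs_of_nonneg (sq_nonneg _)]
        have h1 : ‖Xseq n u - X u‖ ≤ 2 * M :=
          le_trans (norm_sub_le _ _) (by linarith [hXseqbd n u, hXbd u])
        nlinarith [norm_nonneg (Xseq n u - X u)]
    have hpt : ∀ u, ‖Xseq n u - X u‖ ≤ δ / 4 + ‖Xseq n u - X u‖ ^ 2 / δ := by
      intro u
      set g := ‖Xseq n u - X u‖ with hg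
      rw [← sub_le_iff_le_add', le_div_iff₀ hδ]
      nlinarith [sq_nonneg (g - δ / 2)]
    have hmono : ∫ u, ‖Xseq n u - X u‖ ∂μ
        ≤ ∫ u, (δ / 4 + ‖Xseq n u - X u‖ ^ 2 / δ) ∂μ :=
      integral_mono hd1 ((integrable_const _).add (hd2.div_const δ)) hpt
    have hval : ∫ u, (δ / 4 + ‖Xseq n u - X u‖ ^ 2 / δ) ∂μ
        = δ / 4 + (∫ u, ‖Xseq n u - X u‖ ^ 2 ∂μ) / δ := by
      rw [integral_add (integrable_const _) (hd2.div_const δ), integral_const,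
        integral_div, measureReal_def, hμuniv]
      simp
    have hNn := hN n hn
    rw [Real.dist_eq, sub_zero] at hNn
    have hsq : ∫ u, ‖Xseq n u - X u‖ ^ 2 ∂μ < δ ^ 2 / 4 :=
      lt_of_le_of_lt (le_abs_self _) hNn
    have hnonneg : 0 ≤ ∫ u, ‖Xseq n u - X u‖ ∂μ :=
      integral_nonneg fun u => norm_nonneg _
    rw [Real.dist_eq, sub_zero, abs_of_nonneg hnonneg]
    have : (∫ u, ‖Xseq n u - X u‖ ^ 2 ∂μ) / δ < δ / 4 := by
      rw [div_lt_iff₀ hδ]; nlinarith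
    calc ∫ u, ‖Xseq n u - X u‖ ∂μ ≤ δ / 4 + (∫ u, ‖Xseq n u - X u‖ ^ 2 ∂μ) / δ := by
          rw [← hval]; exact hmono
      _ < δ / 4 + δ / 4 := by linarith
      _ < δ := by linarith
  -- main ε-argument
  rw [Metric.tendsto_atTop]
  intro ε hε
  set KB : ℝ := 2 * M ^ 2 + 8 * (f : ℝ) * M ^ 2 with hKB
  have hKB0 : 0 ≤ KB := by positivity
  set ε₁ : ℝ := ε / (2 * (KB + 1)) with hε₁
  have hε₁0 : 0 < ε₁ := by positivity
  obtain ⟨N₁, hN₁⟩ := hcut ε₁ hε₁0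
  have h8 : Tendsto (fun n => (8 * M * C) * ∫ u, ‖Xseq n u - X u‖ ∂μ)
      atTop (nhds 0) := by
    simpa using hL1.const_mul (8 * M * C)
  obtain ⟨N₂, hN₂⟩ := Metric.tendsto_atTop.mp h8 (ε / 2) (by positivity)
  refine ⟨max N₁ N₂, fun n hn => ?_⟩
  have hnN₁ : N₁ ≤ n := le_trans (le_max_left _ _) hn
  have hnN₂ : N₂ ≤ n := le_trans (le_max_right _ _) hn
  -- the kernel difference
  set Dn : ℝ × ℝ → ℝ := fun p => Wseq n p.1 p.2 - W p.1 p.2 with hDn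
  have hDnm : Measurable Dn := (hWseqmeas n).sub hWmeas
  have hDnbd : ∀ p, |Dn p| ≤ C + C := fun p => by
    rw [hDn]
    exact le_trans (abs_sub _ _) (add_le_add (hWseqbd n p.1 p.2) (hWbd p.1 p.2))
  have hcut' : ∀ S T : Set ℝ, MeasurableSet S → MeasurableSet T →
      S ⊆ Set.Icc (0:ℝ) 1 → T ⊆ Set.Icc (0:ℝ) 1 →
      |∫ p, Dn p ∂((volume.restrict S).prod (volume.restrict T))| ≤ ε₁ := by
    intro S T hS hT hSsub hTsub
    haveI := aux_finite_restrict hSsub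
    haveI := aux_finite_restrict hTsub
    have hint : Integrable Dn ((volume.restrict S).prod (volume.restrict T)) :=
      aux_integrable_bdd hDnm.aestronglyMeasurable hDnbd
    rw [integral_prod _ hint]
    exact hN₁ n hnN₁ S T hS hT hSsub hTsub
  -- component functions of the limit signal
  have hxim : ∀ i : Fin f, Measurable fun u => X u i :=
    fun i => (measurable_pi_apply i).comp ((WithLp.measurable_ofLp 2 _).comp hXmeas)
  have hxibd : ∀ (i : Fin f) (u : ℝ), |X u i| ≤ M :=
    fun i u => le_trans (aux_abs_apply_le_norm (X u) i) (hXbd u)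
  have haXm : Measurable fun u => ‖X u‖ ^ 2 := hXmeas.norm.pow_const 2
  have haX0 : ∀ u, 0 ≤ ‖X u‖ ^ 2 := fun u => sq_nonneg _
  have haXbd : ∀ u, ‖X u‖ ^ 2 ≤ M ^ 2 := fun u => by
    nlinarith [hXbd u, norm_nonneg (X u)]
  -- integrability of bilinear pieces
  have hIb : ∀ (c d : ℝ → ℝ) (A B : ℝ), Measurable c → Measurable d →
      (∀ u, |c u| ≤ A) → (∀ u, |d u| ≤ B) →
      Integrable (fun p : ℝ × ℝ => Dn p * (c p.1 * d p.2)) π := by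
    intro c d A B hc hd hcA hdB
    have hA0 : 0 ≤ A := le_trans (abs_nonneg _) (hcA 0)
    have hB0 : 0 ≤ B := le_trans (abs_nonneg _) (hdB 0)
    refine aux_integrable_bdd (K := (C + C) * (A * B)) ?_ ?_
    · exact (hDnm.mul ((hc.comp measurable_fst).mul
        (hd.comp measurable_snd))).aestronglyMeasurable
    · intro p
      rw [abs_mul, abs_mul]
      exact mul_le_mul (hDnbd p)
        (mul_le_mul (hcA p.1) (hdB p.2) (abs_nonneg _) hA0)
        (mul_nonneg (abs_nonneg _) (abs_nonneg _)) (by linarith)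
  have i1 : Integrable (fun p : ℝ × ℝ => Dn p * (‖X p.1‖ ^ 2 * 1)) π :=
    hIb _ _ (M ^ 2) 1 haXm measurable_const
      (fun u => by rw [abs_of_nonneg (haX0 u)]; exact haXbd u)
      (fun u => by norm_num)
  have i2 : Integrable (fun p : ℝ × ℝ => Dn p * (1 * ‖X p.2‖ ^ 2)) π :=
    hIb _ _ 1 (M ^ 2) measurable_const haXm
      (fun u => by norm_num)
      (fun u => by rw [abs_of_nonneg (haX0 u)]; exact haXbd u)
  have i3 : ∀ i : Fin f, Integrable (fun p : ℝ × ℝ => Dn p * (X p.1 i * X p.2 i)) π :=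
    fun i => hIb _ _ M M (hxim i) (hxim i) (hxibd i) (hxibd i)
  have i3S : Integrable (fun p : ℝ × ℝ => ∑ i : Fin f, Dn p * (X p.1 i * X p.2 i)) π :=
    integrable_finset_sum _ (fun i _ => i3 i)
  have i3S2 : Integrable (fun p : ℝ × ℝ => 2 * ∑ i : Fin f, Dn p * (X p.1 i * X p.2 i)) π :=
    i3S.const_mul 2
  have i12 : Integrable (fun p : ℝ × ℝ =>
      Dn p * (‖X p.1‖ ^ 2 * 1) + Dn p * (1 * ‖X p.2‖ ^ 2)) π := i1.add i2
  -- pointwise decomposition of the Term-B integrand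
  have hgdecomp : ∀ p : ℝ × ℝ, Dn p * ‖X p.1 - X p.2‖ ^ 2
      = (Dn p * (‖X p.1‖ ^ 2 * 1) + Dn p * (1 * ‖X p.2‖ ^ 2))
        - 2 * ∑ i : Fin f, Dn p * (X p.1 i * X p.2 i) := by
    intro p
    have hin : ‖X p.1 - X p.2‖ ^ 2
        = ‖X p.1‖ ^ 2 - 2 * ∑ i : Fin f, X p.1 i * X p.2 i + ‖X p.2‖ ^ 2 := by
      rw [norm_sub_sq_real, PiLp.inner_apply]
      simp [RCLike.inner_apply, conj_trivial, mul_comm]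
    have hsum : ∑ i : Fin f, Dn p * (X p.1 i * X p.2 i)
        = Dn p * ∑ i : Fin f, X p.1 i * X p.2 i := (Finset.mul_sum _ _ _).symm
    rw [hin, hsum]; ring
  have hBsplit : ∫ p, Dn p * ‖X p.1 - X p.2‖ ^ 2 ∂π
      = ((∫ p, Dn p * (‖X p.1‖ ^ 2 * 1) ∂π) + (∫ p, Dn p * (1 * ‖X p.2‖ ^ 2) ∂π))
        - 2 * ∑ i : Fin f, ∫ p, Dn p * (X p.1 i * X p.2 i) ∂π := by
    rw [integral_congr_ae (Filter.Eventually.of_forall hgdecomp),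
      integral_sub i12 i3S2, integral_add i1 i2, MeasureTheory.integral_const_mul,
      integral_finset_sum _ (fun i _ => i3 i)]
  -- Term-B bounds from the cut-norm hypothesis
  have hb1 : |∫ p, Dn p * (‖X p.1‖ ^ 2 * 1) ∂π| ≤ ε₁ * (M ^ 2 * 1) :=
    aux_cut_bilinear_nonneg hDnm hDnbd haXm measurable_const haX0 haXbd
      (fun _ => zero_le_one) (fun _ => le_refl 1) hcut'
  have hb2 : |∫ p, Dn p * (1 * ‖X p.2‖ ^ 2) ∂π| ≤ ε₁ * (1 * M ^ 2) :=
    aux_cut_bilinear_nonneg hDnm hDnbd measurable_const haXm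
      (fun _ => zero_le_one) (fun _ => le_refl 1) haX0 haXbd hcut'
  have hb3 : ∀ i : Fin f, |∫ p, Dn p * (X p.1 i * X p.2 i) ∂π| ≤ 4 * (ε₁ * (M * M)) :=
    fun i => aux_cut_bilinear hDnm hDnbd (hxim i) (hxim i) (hxibd i) (hxibd i) hcut'
  have hbsum : |∑ i : Fin f, ∫ p, Dn p * (X p.1 i * X p.2 i) ∂π|
      ≤ (f : ℝ) * (4 * (ε₁ * (M * M))) := by
    calc |∑ i : Fin f, ∫ p, Dn p * (X p.1 i * X p.2 i) ∂π|
        ≤ ∑ i : Fin f, |∫ p, Dn p * (X p.1 i * X p.2 i) ∂π| :=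
          Finset.abs_sum_le_sum_abs _ _
      _ ≤ (f : ℝ) * (4 * (ε₁ * (M * M))) := by
          have := Finset.sum_le_card_nsmul Finset.univ
            (fun i => |∫ p, Dn p * (X p.1 i * X p.2 i) ∂π|)
            (4 * (ε₁ * (M * M))) (fun i _ => hb3 i)
          simpa [nsmul_eq_mul, Finset.card_univ] using this
  have hTB : |∫ p, Dn p * ‖X p.1 - X p.2‖ ^ 2 ∂π| ≤ ε₁ * KB := by
    rw [hBsplit]
    rcases abs_le.mp hb1 with ⟨h1l, h1r⟩
    rcases abs_le.mp hb2 with ⟨h2l, h2r⟩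
    rcases abs_le.mp hbsum with ⟨h3l, h3r⟩
    rw [abs_le, hKB]
    constructor <;> linarith
  -- Term A
  set dX : ℝ → ℝ := fun u => ‖Xseq n u - X u‖ with hdX
  have hdX0 : ∀ u, 0 ≤ dX u := fun u => norm_nonneg _
  have hdXm : Measurable dX := ((hXseqmeas n).sub hXmeas).norm
  have hdXbd : ∀ u, |dX u| ≤ 2 * M := fun u => by
    rw [hdX, abs_of_nonneg (norm_nonneg _)]
    exact le_trans (norm_sub_le _ _) (by linarith [hXseqbd n u, hXbd u])
  have hd1int : Integrable (fun p : ℝ × ℝ => dX p.1) π :=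
    aux_integrable_bdd (hdXm.comp measurable_fst).aestronglyMeasurable
      (fun p => hdXbd p.1)
  have hd2int : Integrable (fun p : ℝ × ℝ => dX p.2) π :=
    aux_integrable_bdd (hdXm.comp measurable_snd).aestronglyMeasurable
      (fun p => hdXbd p.2)
  set fA : ℝ × ℝ → ℝ := fun p =>
    Wseq n p.1 p.2 * (‖Xseq n p.1 - Xseq n p.2‖ ^ 2 - ‖X p.1 - X p.2‖ ^ 2) with hfA
  have hfAint : Integrable fA π := by
    refine aux_integrable_bdd (K := C * (8 * M ^ 2)) ?_ ?_
    · exact ((hWseqmeas n).mul ((hgm _ (hXseqmeas n)).sub (hgm X hXmeas))).aestronglyMeasurable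
    · intro p
      rw [hfA, abs_mul]
      have h1 : |‖Xseq n p.1 - Xseq n p.2‖ ^ 2 - ‖X p.1 - X p.2‖ ^ 2| ≤ 8 * M ^ 2 := by
        have := hgbd _ (hXseqbd n) p
        have := hgbd X hXbd p
        rw [abs_le]
        constructor <;> nlinarith [sq_nonneg ‖Xseq n p.1 - Xseq n p.2‖, sq_nonneg ‖X p.1 - X p.2‖]
      exact mul_le_mul (hWseqbd n p.1 p.2) h1 (abs_nonneg _) hC0
  have hptA : ∀ p : ℝ × ℝ, |fA p| ≤ C * (4 * M * (dX p.1 + dX p.2)) := by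
    intro p
    have hab : ‖(Xseq n p.1 - Xseq n p.2) - (X p.1 - X p.2)‖ ≤ dX p.1 + dX p.2 := by
      have h : (Xseq n p.1 - Xseq n p.2) - (X p.1 - X p.2)
          = (Xseq n p.1 - X p.1) - (Xseq n p.2 - X p.2) := by abel
      rw [h]
      exact norm_sub_le _ _
    have hnn : |‖Xseq n p.1 - Xseq n p.2‖ - ‖X p.1 - X p.2‖|
        ≤ ‖(Xseq n p.1 - Xseq n p.2) - (X p.1 - X p.2)‖ := abs_norm_sub_norm_le _ _
    have ha2 : ‖Xseq n p.1 - Xseq n p.2‖ ≤ 2 * M :=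
      le_trans (norm_sub_le _ _) (by linarith [hXseqbd n p.1, hXseqbd n p.2])
    have hb2' : ‖X p.1 - X p.2‖ ≤ 2 * M :=
      le_trans (norm_sub_le _ _) (by linarith [hXbd p.1, hXbd p.2])
    have habs : |‖Xseq n p.1 - Xseq n p.2‖ ^ 2 - ‖X p.1 - X p.2‖ ^ 2|
        ≤ 4 * M * (dX p.1 + dX p.2) := by
      have h0 : |‖Xseq n p.1 - Xseq n p.2‖ ^ 2 - ‖X p.1 - X p.2‖ ^ 2|
          = |‖Xseq n p.1 - Xseq n p.2‖ - ‖X p.1 - X p.2‖|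
            * |‖Xseq n p.1 - Xseq n p.2‖ + ‖X p.1 - X p.2‖| := by
        rw [← abs_mul]; congr 1; ring
      rw [h0, abs_of_nonneg (by positivity : (0:ℝ)
        ≤ ‖Xseq n p.1 - Xseq n p.2‖ + ‖X p.1 - X p.2‖)]
      calc |‖Xseq n p.1 - Xseq n p.2‖ - ‖X p.1 - X p.2‖|
            * (‖Xseq n p.1 - Xseq n p.2‖ + ‖X p.1 - X p.2‖)
          ≤ (dX p.1 + dX p.2) * (4 * M) :=
            mul_le_mul (le_trans hnn hab) (by linarith)
              (by positivity) (add_nonneg (hdX0 p.1) (hdX0 p.2))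
        _ = 4 * M * (dX p.1 + dX p.2) := by ring
    calc |fA p| = |Wseq n p.1 p.2|
          * |‖Xseq n p.1 - Xseq n p.2‖ ^ 2 - ‖X p.1 - X p.2‖ ^ 2| := by
            rw [hfA, abs_mul]
      _ ≤ C * (4 * M * (dX p.1 + dX p.2)) :=
          mul_le_mul (hWseqbd n p.1 p.2) habs (abs_nonneg _) hC0
  have hboundint : Integrable (fun p : ℝ × ℝ => C * (4 * M * (dX p.1 + dX p.2))) π :=
    ((hd1int.add hd2int).const_mul (4 * M)).const_mul C
  have hprod1 : ∫ p, dX p.1 ∂π = ∫ u, dX u ∂μ := by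
    have h := integral_prod_mul (μ := μ) (ν := μ) dX (fun _ => (1:ℝ))
    simpa [measureReal_def, hμuniv] using h
  have hprod2 : ∫ p, dX p.2 ∂π = ∫ u, dX u ∂μ := by
    have h := integral_prod_mul (μ := μ) (ν := μ) (fun _ => (1:ℝ)) dX
    simpa [measureReal_def, hμuniv] using h
  have hTA2 : ∫ p, C * (4 * M * (dX p.1 + dX p.2)) ∂π = 8 * M * C * ∫ u, dX u ∂μ := by
    rw [MeasureTheory.integral_const_mul, MeasureTheory.integral_const_mul,
      integral_add hd1int hd2int, hprod1, hprod2]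
    ring
  have hTA1 : |∫ p, fA p ∂π| ≤ ∫ p, C * (4 * M * (dX p.1 + dX p.2)) ∂π := by
    calc |∫ p, fA p ∂π| ≤ ∫ p, |fA p| ∂π := by
          simpa [Real.norm_eq_abs] using norm_integral_le_integral_norm (μ := π) fA
      _ ≤ ∫ p, C * (4 * M * (dX p.1 + dX p.2)) ∂π :=
          integral_mono hfAint.abs hboundint hptA
  have hN₂n := hN₂ n hnN₂
  rw [Real.dist_eq, sub_zero] at hN₂n
  have hTA : |∫ p, fA p ∂π| < ε / 2 :=
    lt_of_le_of_lt (le_trans hTA1 (le_of_eq hTA2))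
      (lt_of_le_of_lt (le_abs_self _) hN₂n)
  -- Term-B final bound
  have hε₁KB : ε₁ * KB < ε / 2 := by
    have hKB1 : (0:ℝ) < KB + 1 := by linarith
    have h1 : ε₁ * (KB + 1) = ε / 2 := by
      rw [hε₁]; field_simp
    nlinarith
  -- the Term-B integrand is integrable
  have hIB : Integrable (fun p : ℝ × ℝ => Dn p * ‖X p.1 - X p.2‖ ^ 2) π := by
    refine aux_integrable_bdd (K := (C + C) * (4 * M ^ 2)) ?_ ?_
    · exact (hDnm.mul (hgm X hXmeas)).aestronglyMeasurable
    · intro p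
      rw [abs_mul, abs_of_nonneg (sq_nonneg (‖X p.1 - X p.2‖))]
      exact mul_le_mul (hDnbd p) (hgbd X hXbd p) (sq_nonneg _) (by linarith)
  -- splitting of the energy difference
  have hsplit : graphonEnergy f (Wseq n) (Xseq n) - graphonEnergy f W X
      = (∫ p, fA p ∂π) + ∫ p, Dn p * ‖X p.1 - X p.2‖ ^ 2 ∂π := by
    rw [hrep (Wseq n) (Xseq n) (hintW _ (hWseqmeas n) (hWseqbd n) _ (hXseqmeas n) (hXseqbd n)),
      hrep W X (hintW _ hWmeas hWbd _ hXmeas hXbd),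
      ← integral_sub (hintW _ (hWseqmeas n) (hWseqbd n) _ (hXseqmeas n) (hXseqbd n))
        (hintW _ hWmeas hWbd _ hXmeas hXbd),
      ← integral_add hfAint hIB]
    apply integral_congr_ae
    apply Filter.Eventually.of_forall
    intro p
    rw [hfA, hDn]
    ring
  rw [Real.dist_eq, hsplit]
  calc |(∫ p, fA p ∂π) + ∫ p, Dn p * ‖X p.1 - X p.2‖ ^ 2 ∂π|
      ≤ |∫ p, fA p ∂π| + |∫ p, Dn p * ‖X p.1 - X p.2‖ ^ 2 ∂π| := abs_add_le _ _
    _ < ε / 2 + ε / 2 := add_lt_add_of_lt_of_le hTA (le_trans hTB hε₁KB.le)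
    _ = ε := by ring
end

section
/- Let ι be a finite type, (Ω, μ) a probability space, and S : Ω → Finset ι a random sample such that for all i, j ∈ ι the events {ω | i ∈ S ω} and {ω | i ∈ S ω ∧ j ∈ S ω} are measurable. Let π i := μ({ω | i ∈ S ω}), π₂ i j := μ({ω | i ∈ S ω ∧ j ∈ S ω}), and let V : ι → ℝ. If π₂ i j > 0 for all i, j ∈ ι (which implies π i > 0 for all i), then the Horvitz–Thompson variance estimator is unbiased for the variance of the Horvitz–Thompson estimator: ∫_Ω (Σ_{i ∈ S ω} Σ_{j ∈ S ω} V i · V j · (1/(π i · π j) − 1/(π₂ i j))) dμ(ω) = Σ_{i ∈ ι} Σ_{j ∈ ι} V i · V j · (π₂ i j − π i · π j) / (π i · π j). -/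
open MeasureTheory

/-- Unbiasedness of the Horvitz–Thompson variance estimator: with inclusion
probabilities `π i = μ {ω | i ∈ S ω}` and joint inclusion probabilities
`π₂ i j = μ {ω | i ∈ S ω ∧ j ∈ S ω}`, all positive `π₂ i j`, the expectation of
`Σ_{i ∈ S ω} Σ_{j ∈ S ω} V i V j (1/(π i π j) − 1/π₂ i j)` equals the variance
`Σᵢ Σⱼ V i V j (π₂ i j − π i π j) / (π i π j)` of the Horvitz–Thompson estimator. -/
theorem horvitzThompson_variance_estimator_unbiased
    {ι : Type*} [Fintype ι] {Ω : Type*} [MeasurableSpace Ω]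
    (μ : Measure Ω) [IsProbabilityMeasure μ]
    (S : Ω → Finset ι)
    (hS : ∀ i : ι, MeasurableSet {ω | i ∈ S ω})
    (hS2 : ∀ i j : ι, MeasurableSet {ω | i ∈ S ω ∧ j ∈ S ω})
    (V : ι → ℝ)
    (hπ₂ : ∀ i j : ι, 0 < (μ {ω | i ∈ S ω ∧ j ∈ S ω}).toReal) :
    ∫ ω, (∑ i ∈ S ω, ∑ j ∈ S ω,
          V i * V j *
            (1 / ((μ {ω' | i ∈ S ω'}).toReal * (μ {ω' | j ∈ S ω'}).toReal)
              - 1 / (μ {ω' | i ∈ S ω' ∧ j ∈ S ω'}).toReal)) ∂μ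
      = ∑ i : ι, ∑ j : ι,
          V i * V j *
            ((μ {ω' | i ∈ S ω' ∧ j ∈ S ω'}).toReal
              - (μ {ω' | i ∈ S ω'}).toReal * (μ {ω' | j ∈ S ω'}).toReal) /
            ((μ {ω' | i ∈ S ω'}).toReal * (μ {ω' | j ∈ S ω'}).toReal) := by
  classical
  set f : ι → ι → ℝ := fun i j =>
    V i * V j *
      (1 / ((μ {ω' | i ∈ S ω'}).toReal * (μ {ω' | j ∈ S ω'}).toReal)
        - 1 / (μ {ω' | i ∈ S ω' ∧ j ∈ S ω'}).toReal) with hf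
  have h1 : ∀ (ω : Ω) (g : ι → ℝ),
      ∑ i ∈ S ω, g i = ∑ i : ι, if i ∈ S ω then g i else 0 := by
    intro ω g
    rw [Finset.sum_ite_mem, Finset.univ_inter]
  have hrw : ∀ ω, (∑ i ∈ S ω, ∑ j ∈ S ω, f i j)
      = ∑ i : ι, ∑ j : ι,
          ({ω' | i ∈ S ω' ∧ j ∈ S ω'}.indicator (fun _ => f i j) ω) := by
    intro ω
    rw [h1]
    refine Finset.sum_congr rfl fun i _ => ?_
    by_cases hi : i ∈ S ω
    · rw [if_pos hi, h1]
      refine Finset.sum_congr rfl fun j _ => ?_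
      by_cases hj : j ∈ S ω
      · simp [Set.indicator_apply, hi, hj]
      · simp [Set.indicator_apply, hi, hj]
    · rw [if_neg hi]
      refine (Finset.sum_eq_zero fun j _ => ?_).symm
      simp [Set.indicator_apply, hi]
  rw [integral_congr_ae (Filter.Eventually.of_forall hrw)]
  have hint : ∀ i j : ι,
      Integrable ({ω' | i ∈ S ω' ∧ j ∈ S ω'}.indicator (fun _ => f i j)) μ :=
    fun i j => (integrable_const (f i j)).indicator (hS2 i j)
  rw [integral_finset_sum _ fun i _ => integrable_finset_sum _ fun j _ => hint i j]
  refine Finset.sum_congr rfl fun i _ => ?_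
  rw [integral_finset_sum _ fun j _ => hint i j]
  refine Finset.sum_congr rfl fun j _ => ?_
  rw [integral_indicator_const _ (hS2 i j)]
  have hpii : 0 < (μ {ω' | i ∈ S ω'}).toReal := by
    have := hπ₂ i i; simpa using this
  have hpij : 0 < (μ {ω' | j ∈ S ω'}).toReal := by
    have := hπ₂ j j; simpa using this
  have h2 := hπ₂ i j
  simp only [hf, smul_eq_mul, Measure.real]
  field_simp
end
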